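/- Let n, q be coprime with 0 < q < n and n = bq + r with 0 < r < q. Define d(k) = ⌊kq/n⌋ mod 2. Then the sequence d consists of maximal constant blocks whose lengths take exactly two values, b and b+1; i.e., for every k, the length of the maximal constant run of d containing position k is either b or b+1. -/
import Mathlib

private lemma jump_iff (n q : ℕ) (hq : 0 < q) (hqn : q < n) (k : ℕ) :
    (k+1)*q % n < q ↔ (k+1)*q/n % 2 ≠ k*q/n % 2 := by
  have hn : 0 < n := lt_trans hq hqn
  have ha : (k+1)*q = k*q + q := by ring
  have hqd : q / n = 0 := Nat.div_eq_of_lt hqn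
  have hqm : q % n = q := Nat.mod_eq_of_lt hqn
  have hs : k*q % n < n := Nat.mod_lt _ hn
  rw [ha, Nat.add_div hn, Nat.add_mod, hqd, hqm]
  by_cases h : n ≤ k*q % n + q
  · rw [Nat.mod_eq_sub_mod h, Nat.mod_eq_of_lt (by omega), if_pos h]
    omega
  · rw [Nat.mod_eq_of_lt (by omega), if_neg h]
    omega

/-- with n = b*q + r, 0 < r < q, the maximal constant run of
d(k) = ⌊kq/n⌋ mod 2 containing any position k has length b or b+1. -/
theorem stmt14 (n q b r : ℕ) (hq : 0 < q) (hqn : q < n)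
    (hcop : Nat.Coprime q n) (hn : n = b * q + r) (hr0 : 0 < r) (hr : r < q) :
    ∀ k : ℕ, ∃ i j : ℕ, i ≤ k ∧ k ≤ j ∧
      (∀ m, i ≤ m → m ≤ j → m * q / n % 2 = i * q / n % 2) ∧
      (i = 0 ∨ (i - 1) * q / n % 2 ≠ i * q / n % 2) ∧
      ((j + 1) * q / n % 2 ≠ j * q / n % 2) ∧
      (j + 1 - i = b ∨ j + 1 - i = b + 1) := by
  intro k
  have hn0 : 0 < n := lt_trans hq hqn
  have hqm : q % n = q := Nat.mod_eq_of_lt hqn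
  have hb : 1 ≤ b := by
    rcases Nat.eq_zero_or_pos b with h | h
    · subst h; omega
    · exact h
  set P : ℕ → Prop := fun m => m*q % n < q with hP
  have hP0 : P 0 := by simp [hP, hq]
  set i := Nat.findGreatest P k with hi
  have hPi : P i := Nat.findGreatest_spec (Nat.zero_le k) hP0
  have hik : i ≤ k := Nat.findGreatest_le k
  have hs : i*q % n < q := hPi
  have hsn : i*q % n < n := Nat.mod_lt _ hn0
  -- mod formula along a run
  have hmod : ∀ m, i*q % n + m*q < n → (i+m)*q % n = i*q % n + m*q := by
    intro m
    induction m with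
    | zero => simp
    | succ m ih =>
      intro hlt
      have hmq : (m+1)*q = m*q + q := by ring
      have h1 : i*q % n + m*q < n := by omega
      have h2 := ih h1
      have h3 : (i+(m+1))*q = (i+m)*q + q := by ring
      rw [h3, Nat.add_mod, h2, hqm, Nat.mod_eq_of_lt (by omega)]
      omega
  -- key existence of run length L
  have key : ∃ L, (L = b ∨ L = b+1) ∧
      (∀ m, 1 ≤ m → m < L → q ≤ (i+m)*q % n) ∧ (i+L)*q % n < q := by
    by_cases hsr : i*q % n < r
    · refine ⟨b+1, Or.inr rfl, ?_, ?_⟩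
      · intro m hm1 hm2
        have hmq : m*q ≤ b*q := mul_le_mul_left (by omega) q
        have h1q : 1*q ≤ m*q := mul_le_mul_left (by omega) q
        have hlt : i*q % n + m*q < n := by omega
        rw [hmod m hlt]
        omega
      · have hb' : i*q % n + b*q < n := by omega
        have e : (i+(b+1))*q = (i+b)*q + q := by ring
        rw [e, Nat.add_mod, hmod b hb', hqm,
          Nat.mod_eq_sub_mod (by omega), Nat.mod_eq_of_lt (by omega)]
        omega
    · refine ⟨b, Or.inl rfl, ?_, ?_⟩
      · intro m hm1 hm2
        have e2 : (b-1)*q + 1*q = b*q := by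
          rw [← Nat.add_mul]
          congr 1
          omega
        have hmq : m*q ≤ (b-1)*q := mul_le_mul_left (by omega) q
        have h1q : 1*q ≤ m*q := mul_le_mul_left (by omega) q
        have hlt : i*q % n + m*q < n := by omega
        rw [hmod m hlt]
        omega
      · have e2 : (b-1)*q + 1*q = b*q := by
          rw [← Nat.add_mul]
          congr 1
          omega
        have hb' : i*q % n + (b-1)*q < n := by omega
        rw [show i+b = i+(b-1)+1 from by omega,
          show (i+(b-1)+1)*q = (i+(b-1))*q + q from by ring,
          Nat.add_mod, hmod (b-1) hb', hqm,
          Nat.mod_eq_sub_mod (by omega), Nat.mod_eq_of_lt (by omega)]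
        omega
  obtain ⟨L, hL, hinner, hjump⟩ := key
  have hL1 : 1 ≤ L := by omega
  refine ⟨i, i + L - 1, hik, ?_, ?_, ?_, ?_, by omega⟩
  · -- k ≤ i + L - 1
    by_contra hkj
    have h1 : i + L ≤ k := by omega
    exact Nat.findGreatest_is_greatest (P := P) (by omega) h1 hjump
  · -- constancy on [i, i+L-1]
    have hconst : ∀ t, t ≤ L - 1 → (i+t)*q/n % 2 = i*q/n % 2 := by
      intro t
      induction t with
      | zero => simp
      | succ t ih =>
        intro ht
        have h1 := ih (by omega)
        have h2 : q ≤ (i+(t+1))*q % n := hinner (t+1) (by omega) (by omega)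
        have h4 : (i+t+1)*q/n % 2 = (i+t)*q/n % 2 := by
          by_contra hne
          have h5 := (jump_iff n q hq hqn (i+t)).mpr hne
          have e : i+t+1 = i+(t+1) := by omega
          rw [e] at h5
          omega
        rw [show i+(t+1) = i+t+1 from by omega, h4]
        exact h1
    intro m h1 h2
    have h3 := hconst (m - i) (by omega)
    rw [show i + (m-i) = m from by omega] at h3
    exact h3
  · -- left boundary
    rcases Nat.eq_zero_or_pos i with h | h
    · exact Or.inl h
    · right
      have h5 := (jump_iff n q hq hqn (i-1)).mp (by rw [show i-1+1 = i from by omega]; exact hPi)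
      rw [show i-1+1 = i from by omega] at h5
      exact h5.symm
  · -- right boundary
    have h5 := (jump_iff n q hq hqn (i+L-1)).mp (by rw [show i+L-1+1 = i+L from by omega]; exact hjump)
    rw [show i+L-1+1 = i+L from by omega] at h5
    rw [show i+L-1+1 = i+L from by omega]
    exact h5
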